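/- For any pair (μ₀, μ) of finite nonnegative Borel measures, with μ₀ supported in X and μ supported in X × U, satisfying the discounted Liouville equation, the support of μ₀ is contained in the maximum controlled invariant set: supp μ₀ ⊆ X_I. -/

import Mathlib

open MeasureTheory

/-- The (topological) support of a Borel measure: the set of points all of whose
open neighborhoods have positive measure. -/
def msupport {α : Type*} [TopologicalSpace α] [MeasurableSpace α] (μ : Measure α) : Set α :=
  {x | ∀ s : Set α, IsOpen s → x ∈ s → 0 < μ s}

/-- The maximum controlled invariant set of the discrete-time system
`x_{t+1} = f (x_t, u_t)` with state constraint set `X` and input constraint set `U`. -/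
def mciD {n m : ℕ} (X : Set (EuclideanSpace ℝ (Fin n))) (U : Set (EuclideanSpace ℝ (Fin m)))
    (f : EuclideanSpace ℝ (Fin n) → EuclideanSpace ℝ (Fin m) → EuclideanSpace ℝ (Fin n)) :
    Set (EuclideanSpace ℝ (Fin n)) :=
  {x0 | ∃ (x : ℕ → EuclideanSpace ℝ (Fin n)) (u : ℕ → EuclideanSpace ℝ (Fin m)),
    x 0 = x0 ∧ (∀ t, x (t + 1) = f (x t) (u t)) ∧ (∀ t, x t ∈ X) ∧ (∀ t, u t ∈ U)}

/-- The discrete-time discounted Liouville equation for the pair `(μ₀, μ)`. -/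
def LiouvilleD {n m : ℕ}
    (f : EuclideanSpace ℝ (Fin n) → EuclideanSpace ℝ (Fin m) → EuclideanSpace ℝ (Fin n))
    (α : ℝ) (μ₀ : Measure (EuclideanSpace ℝ (Fin n)))
    (μ : Measure (EuclideanSpace ℝ (Fin n) × EuclideanSpace ℝ (Fin m))) : Prop :=
  ∀ v : EuclideanSpace ℝ (Fin n) → ℝ, Continuous v →
    ∫ p, v p.1 ∂μ = ∫ x, v x ∂μ₀ + α * ∫ p, v (f p.1 p.2) ∂μ

section Aux

open Metric Set

variable {n m : ℕ}

/-- Points admitting an admissible `k`-step trajectory. -/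
def Xseq (X : Set (EuclideanSpace ℝ (Fin n))) (U : Set (EuclideanSpace ℝ (Fin m)))
    (f : EuclideanSpace ℝ (Fin n) → EuclideanSpace ℝ (Fin m) → EuclideanSpace ℝ (Fin n)) :
    ℕ → Set (EuclideanSpace ℝ (Fin n))
  | 0 => X
  | k + 1 => {x | x ∈ X ∧ ∃ u ∈ U, f x u ∈ Xseq X U f k}

variable {X : Set (EuclideanSpace ℝ (Fin n))} {U : Set (EuclideanSpace ℝ (Fin m))}
  {f : EuclideanSpace ℝ (Fin n) → EuclideanSpace ℝ (Fin m) → EuclideanSpace ℝ (Fin n)}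

lemma Xseq_succ (k : ℕ) :
    Xseq X U f (k + 1) = {x | x ∈ X ∧ ∃ u ∈ U, f x u ∈ Xseq X U f k} := rfl

lemma Xseq_subset_X : ∀ k, Xseq X U f k ⊆ X
  | 0 => subset_rfl
  | k + 1 => fun _ hx => hx.1

lemma Xseq_succ_subset : ∀ k, Xseq X U f (k + 1) ⊆ Xseq X U f k
  | 0 => Xseq_subset_X 1
  | k + 1 => fun x hx => ⟨hx.1, by
      obtain ⟨_, u, hu, hfu⟩ := hx
      exact ⟨u, hu, Xseq_succ_subset k hfu⟩⟩

lemma Xseq_isCompact (hX : IsCompact X) (hU : IsCompact U)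
    (hf : Continuous fun p : EuclideanSpace ℝ (Fin n) × EuclideanSpace ℝ (Fin m) => f p.1 p.2) :
    ∀ k, IsCompact (Xseq X U f k)
  | 0 => hX
  | k + 1 => by
      have hk := Xseq_isCompact hX hU hf k
      have hC : IsCompact ((X ×ˢ U) ∩ (fun p : EuclideanSpace ℝ (Fin n) × EuclideanSpace ℝ (Fin m)
          => f p.1 p.2) ⁻¹' Xseq X U f k) :=
        (hX.prod hU).inter_right (hk.isClosed.preimage hf)
      have heq : Xseq X U f (k + 1) = X ∩ (Prod.fst ''
          ((X ×ˢ U) ∩ (fun p : EuclideanSpace ℝ (Fin n) × EuclideanSpace ℝ (Fin m)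
          => f p.1 p.2) ⁻¹' Xseq X U f k)) := by
        ext x
        constructor
        · rintro ⟨hxX, u, hu, hfu⟩
          exact ⟨hxX, ⟨(x, u), ⟨⟨hxX, hu⟩, hfu⟩, rfl⟩⟩
        · rintro ⟨hxX, ⟨p, ⟨⟨hpX, hpU⟩, hfp⟩, rfl⟩⟩
          exact ⟨hxX, p.2, hpU, hfp⟩
      rw [heq]
      exact hX.inter_right ((hC.image continuous_fst).isClosed)

lemma measure_msupport_compl {α : Type*} [TopologicalSpace α] [MeasurableSpace α]
    [SecondCountableTopology α] (μ : Measure α) : μ (msupport μ)ᶜ = 0 := by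
  apply measure_null_of_locally_null
  intro x hx
  simp only [msupport, Set.mem_compl_iff, Set.mem_setOf_eq, not_forall] at hx
  obtain ⟨s, hs, hxs, hμs⟩ := hx
  have hμs' : μ s = 0 := by simpa using hμs
  exact ⟨s, mem_nhdsWithin_of_mem_nhds (hs.mem_nhds hxs), hμs'⟩

lemma ae_mem_msupport {α : Type*} [TopologicalSpace α] [MeasurableSpace α]
    [SecondCountableTopology α] (μ : Measure α) : ∀ᵐ a ∂μ, a ∈ msupport μ :=
  ae_iff.2 (measure_msupport_compl μ)

lemma integrable_bdd {δ : Type*} [MeasurableSpace δ] [TopologicalSpace δ]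
    [OpensMeasurableSpace δ] {μ : Measure δ} [IsFiniteMeasure μ] {g : δ → ℝ}
    (hg : Continuous g) (C : ℝ) (hb : ∀ x, ‖g x‖ ≤ C) : Integrable g μ :=
  ⟨hg.aestronglyMeasurable, HasFiniteIntegral.of_bounded (ae_of_all _ hb)⟩

end Aux

open Metric Set

theorem support_of_initial_measure_subset_MCI {n m : ℕ}
    (X : Set (EuclideanSpace ℝ (Fin n))) (U : Set (EuclideanSpace ℝ (Fin m)))
    (hX : IsCompact X) (hU : IsCompact U)
    (f : EuclideanSpace ℝ (Fin n) → EuclideanSpace ℝ (Fin m) → EuclideanSpace ℝ (Fin n))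
    (hf : Continuous fun p : EuclideanSpace ℝ (Fin n) × EuclideanSpace ℝ (Fin m) => f p.1 p.2)
    (α : ℝ) (hα0 : 0 < α) (hα1 : α < 1)
    (μ₀ : Measure (EuclideanSpace ℝ (Fin n)))
    (μ : Measure (EuclideanSpace ℝ (Fin n) × EuclideanSpace ℝ (Fin m)))
    [IsFiniteMeasure μ₀] [IsFiniteMeasure μ]
    (hsupp₀ : msupport μ₀ ⊆ X) (hsupp : msupport μ ⊆ X ×ˢ U)
    (hLiouville : LiouvilleD f α μ₀ μ) :
    msupport μ₀ ⊆ mciD X U f := by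
  classical
  have haeXU : ∀ᵐ p ∂μ, p ∈ X ×ˢ U := (ae_mem_msupport μ).mono fun p hp => hsupp hp
  -- Step 1: a.e. p, p.1 ∈ Xseq X U f k, for every k.
  have key : ∀ k : ℕ, ∀ᵐ p ∂μ, p.1 ∈ Xseq X U f k := by
    intro k
    induction k with
    | zero => exact haeXU.mono fun p hp => hp.1
    | succ k ih =>
      by_cases hS : (Xseq X U f k).Nonempty
      · set S := Xseq X U f k with hSdef
        set w : EuclideanSpace ℝ (Fin n) → ℝ := fun x => min 1 (infDist x S) with hw
        have hwc : Continuous w := continuous_const.min (continuous_infDist_pt S)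
        have hw0 : ∀ x, 0 ≤ w x := fun x => le_min zero_le_one infDist_nonneg
        have hwb : ∀ x, ‖w x‖ ≤ 1 := fun x => by
          rw [Real.norm_eq_abs, abs_of_nonneg (hw0 x)]
          exact min_le_left _ _
        have h1 : ∫ p, w p.1 ∂μ = 0 := by
          have hz : (fun p : EuclideanSpace ℝ (Fin n) × EuclideanSpace ℝ (Fin m) => w p.1)
              =ᵐ[μ] 0 := ih.mono fun p hp => by
            simp [hw, infDist_zero_of_mem hp]
          rw [integral_congr_ae hz]; simp
        have hL := hLiouville w hwc
        rw [h1] at hL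
        have h2 : 0 ≤ ∫ x, w x ∂μ₀ := integral_nonneg hw0
        have h3 : 0 ≤ ∫ p, w (f p.1 p.2) ∂μ := integral_nonneg fun p => hw0 _
        have h4 : ∫ p, w (f p.1 p.2) ∂μ = 0 := by nlinarith
        have hInt : Integrable (fun p : EuclideanSpace ℝ (Fin n) × EuclideanSpace ℝ (Fin m)
            => w (f p.1 p.2)) μ := integrable_bdd (hwc.comp hf) 1 fun p => hwb _
        have h5 : (fun p : EuclideanSpace ℝ (Fin n) × EuclideanSpace ℝ (Fin m)
            => w (f p.1 p.2)) =ᵐ[μ] 0 :=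
          (integral_eq_zero_iff_of_nonneg (fun p => hw0 _) hInt).1 h4
        have hmem : ∀ᵐ p ∂μ, f p.1 p.2 ∈ S := h5.mono fun p hp => by
          have hp0 : min 1 (infDist (f p.1 p.2) S) = 0 := hp
          have hd : infDist (f p.1 p.2) S = 0 := by
            rcases min_eq_iff.1 hp0 with h | h
            · exact absurd h.1 one_ne_zero
            · exact h.1
          exact ((Xseq_isCompact hX hU hf k).isClosed.mem_iff_infDist_zero hS).2 hd
        exact (haeXU.and hmem).mono fun p hp => ⟨hp.1.1, p.2, hp.1.2, hp.2⟩
      · rw [not_nonempty_iff_eq_empty] at hS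
        have h0 : μ Set.univ = 0 := by
          have := ae_iff.mp ih
          simpa [hS] using this
        exact ae_iff.2 (measure_mono_null (Set.subset_univ _) h0)
  -- Step 2: msupport μ₀ ⊆ Xseq X U f k, for every k.
  have hsub : ∀ k, msupport μ₀ ⊆ Xseq X U f k := by
    intro k x₀ hx₀
    by_contra hx
    have hclosed := (Xseq_isCompact hX hU hf k).isClosed
    obtain ⟨ε, hε, hball⟩ : ∃ ε > 0, ball x₀ ε ⊆ (Xseq X U f k)ᶜ :=
      Metric.isOpen_iff.mp hclosed.isOpen_compl x₀ hx
    set v : EuclideanSpace ℝ (Fin n) → ℝ := fun x => max 0 (1 - dist x x₀ / ε) with hv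
    have hvc : Continuous v := continuous_const.max
      (continuous_const.sub ((continuous_id.dist continuous_const).div_const ε))
    have hv0 : ∀ x, 0 ≤ v x := fun x => le_max_left _ _
    have hvb : ∀ x, ‖v x‖ ≤ 1 := fun x => by
      rw [Real.norm_eq_abs, abs_of_nonneg (hv0 x)]
      apply max_le zero_le_one
      have : 0 ≤ dist x x₀ / ε := div_nonneg dist_nonneg hε.le
      linarith
    have hvS : ∀ x ∈ Xseq X U f k, v x = 0 := by
      intro x hxS
      have hd : ε ≤ dist x x₀ := by
        by_contra h
        push_neg at h
        exact hball (mem_ball.2 h) hxS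
      have hle : 1 - dist x x₀ / ε ≤ 0 := by
        rw [sub_nonpos, le_div_iff₀ hε]
        linarith
      simp [hv, max_eq_left hle]
    have h1 : ∫ p, v p.1 ∂μ = 0 := by
      have hz : (fun p : EuclideanSpace ℝ (Fin n) × EuclideanSpace ℝ (Fin m) => v p.1)
          =ᵐ[μ] 0 := (key k).mono fun p hp => hvS _ hp
      rw [integral_congr_ae hz]; simp
    have hL := hLiouville v hvc
    rw [h1] at hL
    have h2 : 0 ≤ ∫ x, v x ∂μ₀ := integral_nonneg hv0
    have h3 : 0 ≤ ∫ p, v (f p.1 p.2) ∂μ := integral_nonneg fun p => hv0 _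
    have h4 : ∫ x, v x ∂μ₀ = 0 := by nlinarith
    have h5 : v =ᵐ[μ₀] 0 :=
      (integral_eq_zero_iff_of_nonneg hv0 (integrable_bdd hvc 1 hvb)).1 h4
    have hnull : μ₀ {x | v x ≠ 0} = 0 := by
      have := ae_iff.mp h5
      simpa using this
    have hposmeas : 0 < μ₀ (ball x₀ (ε / 2)) :=
      hx₀ (ball x₀ (ε / 2)) isOpen_ball (mem_ball_self (by positivity))
    have hzero : μ₀ (ball x₀ (ε / 2)) = 0 := by
      refine measure_mono_null (fun x hxb => ?_) hnull
      have hdx : dist x x₀ < ε / 2 := mem_ball.1 hxb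
      have hpos : 0 < 1 - dist x x₀ / ε := by
        rw [sub_pos, div_lt_one hε]
        linarith
      exact ne_of_gt (lt_of_lt_of_le hpos (le_max_right _ _))
    rw [hzero] at hposmeas
    exact lt_irrefl _ hposmeas
  -- Step 3: the intersection of the Xseq is viable.
  set SI : Set (EuclideanSpace ℝ (Fin n)) := ⋂ k, Xseq X U f k with hSI
  have hSIX : SI ⊆ X := (Set.iInter_subset _ 0).trans (Xseq_subset_X 0)
  have hstep : ∀ x ∈ SI, ∃ u ∈ U, f x u ∈ SI := by
    intro x hx
    set K : ℕ → Set (EuclideanSpace ℝ (Fin m)) :=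
      fun j => U ∩ {u | f x u ∈ Xseq X U f j} with hK
    have hfx : Continuous fun u => f x u := hf.comp (Continuous.prodMk_right x)
    have hclosed : ∀ j, IsClosed (K j) := fun j =>
      hU.isClosed.inter ((Xseq_isCompact hX hU hf j).isClosed.preimage hfx)
    have hanti : ∀ j, K (j + 1) ⊆ K j := fun j u hu =>
      ⟨hu.1, Xseq_succ_subset j hu.2⟩
    have hne : ∀ j, (K j).Nonempty := by
      intro j
      have hxj : x ∈ Xseq X U f (j + 1) := Set.mem_iInter.mp hx (j + 1)
      obtain ⟨-, u, hu, hfu⟩ := hxj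
      exact ⟨u, hu, hfu⟩
    have hcpt : IsCompact (K 0) := hU.inter_right ((Xseq_isCompact hX hU hf 0).isClosed.preimage hfx)
    obtain ⟨u, hu⟩ :=
      IsCompact.nonempty_iInter_of_sequence_nonempty_isCompact_isClosed K hanti hne hcpt hclosed
    refine ⟨u, (Set.mem_iInter.mp hu 0).1, Set.mem_iInter.2 fun j => (Set.mem_iInter.mp hu j).2⟩
  -- Step 4: build an infinite trajectory.
  intro x₀ hx₀
  have hx₀' : x₀ ∈ SI := Set.mem_iInter.2 fun k => hsub k hx₀
  choose! g hg hfg using hstep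
  let xs : ℕ → {x // x ∈ SI} := fun t =>
    Nat.rec ⟨x₀, hx₀'⟩ (fun _ p => ⟨f p.1 (g p.1), hfg p.1 p.2⟩) t
  exact ⟨fun t => (xs t).1, fun t => g (xs t).1, rfl, fun t => rfl,
    fun t => hSIX (xs t).2, fun t => hg _ (xs t).2⟩
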